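/- Let G be a digraph and x a non-terminating chip-distribution on G. Then there exists a recurrent chip-distribution y with x ⤳ y; in particular, x ~ y. -/

import Mathlib

namespace ChipFiring

variable {V : Type*}

/-- Out-degree of a vertex: total multiplicity of edges leaving `v`. -/
def outdeg [Fintype V] (d : V → V → ℕ) (v : V) : ℕ := ∑ u, d v u

/-- In-degree of a vertex: total multiplicity of edges entering `v`. -/
def indeg [Fintype V] (d : V → V → ℕ) (v : V) : ℕ := ∑ u, d u v

/-- A digraph (multiplicity function) has no loops. -/
def Loopless (d : V → V → ℕ) : Prop := ∀ v, d v v = 0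

/-- Weak connectivity: each pair of vertices is joined by an undirected walk. -/
def WeaklyConnected (d : V → V → ℕ) : Prop :=
  ∀ u v : V, Relation.ReflTransGen (fun a b => d a b ≠ 0 ∨ d b a ≠ 0) u v

/-- Strong connectivity: each ordered pair of vertices is joined by a directed walk. -/
def StronglyConnected (d : V → V → ℕ) : Prop :=
  ∀ u v : V, Relation.ReflTransGen (fun a b => d a b ≠ 0) u v

/-- Eulerian: out-degree equals in-degree at each vertex. -/
def Eulerian [Fintype V] (d : V → V → ℕ) : Prop := ∀ v, outdeg d v = indeg d v

/-- The Laplacian matrix: `L(u,u) = -d⁺(u)`, and `L(u,v) = d(v,u)` for `u ≠ v`. -/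
def laplacian [Fintype V] [DecidableEq V] (d : V → V → ℕ) : Matrix V V ℤ :=
  fun u v => if u = v then -(outdeg d v : ℤ) else (d v u : ℤ)

/-- Firing vertex `v`: `v` sends one chip along each outgoing edge. -/
def fire [Fintype V] [DecidableEq V] (d : V → V → ℕ) (x : V → ℕ) (v : V) : V → ℕ :=
  fun u => if u = v then x v - outdeg d v else x u + d v u

/-- `LegalSeq d x α` : the sequence of firings `α` is legal from initial distribution `x`. -/
def LegalSeq [Fintype V] [DecidableEq V] (d : V → V → ℕ) : (V → ℕ) → List V → Prop
  | _, [] => True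
  | x, v :: rest => outdeg d v ≤ x v ∧ LegalSeq d (fire d x v) rest

/-- The chip-distribution obtained from `x` after performing the firings `α`. -/
def runGame [Fintype V] [DecidableEq V] (d : V → V → ℕ) : (V → ℕ) → List V → (V → ℕ)
  | x, [] => x
  | x, v :: rest => runGame d (fire d x v) rest

/-- The firing vector of a game: how many times each vertex is fired. -/
def firingVector [DecidableEq V] (α : List V) : V → ℕ := fun v => α.count v

/-- `x ⤳ y` : some legal game transforms `x` into `y`. -/
def Reaches [Fintype V] [DecidableEq V] (d : V → V → ℕ) (x y : V → ℕ) : Prop :=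
  ∃ α : List V, LegalSeq d x α ∧ runGame d x α = y

/-- A period vector: a nonnegative integer vector in the kernel of the Laplacian. -/
def PeriodVector [Fintype V] [DecidableEq V] (d : V → V → ℕ) (p : V → ℕ) : Prop :=
  (laplacian d).mulVec (fun v => (p v : ℤ)) = 0

/-- A vector `f ∈ ℕ^V` is reduced if `f ≥ p` fails for every nonzero period vector `p`. -/
def Reduced [Fintype V] [DecidableEq V] (d : V → V → ℕ) (f : V → ℕ) : Prop :=
  ∀ p : V → ℕ, PeriodVector d p → p ≠ 0 → ¬ (∀ v, p v ≤ f v)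

/-- A distribution is recurrent if a nonempty legal game transforms it back to itself. -/
def Recurrent [Fintype V] [DecidableEq V] (d : V → V → ℕ) (x : V → ℕ) : Prop :=
  ∃ α : List V, α ≠ [] ∧ LegalSeq d x α ∧ runGame d x α = x

/-- Linear equivalence: `x = y + Lz` for some integer vector `z`. -/
def LinEquiv [Fintype V] [DecidableEq V] (d : V → V → ℕ) (x y : V → ℕ) : Prop :=
  ∃ z : V → ℤ, ∀ v, (x v : ℤ) = (y v : ℤ) + (laplacian d).mulVec z v

/-- `x` is non-terminating: there is an infinite sequence of legal firings from `x`. -/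
def NonTerminating [Fintype V] [DecidableEq V] (d : V → V → ℕ) (x : V → ℕ) : Prop :=
  ∃ s : ℕ → V, ∀ n : ℕ, LegalSeq d x (List.ofFn (fun i : Fin n => s i))

end ChipFiring

namespace ChipFiring

section Aux

variable {V : Type*} [Fintype V] [DecidableEq V]

lemma runGame_append (d : V → V → ℕ) (x : V → ℕ) (α β : List V) :
    runGame d x (α ++ β) = runGame d (runGame d x α) β := by
  induction α generalizing x with
  | nil => rfl
  | cons a α ih => simpa [runGame] using ih (fire d x a)

lemma legalSeq_append (d : V → V → ℕ) (x : V → ℕ) (α β : List V)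
    (h : LegalSeq d x (α ++ β)) : LegalSeq d x α ∧ LegalSeq d (runGame d x α) β := by
  induction α generalizing x with
  | nil => exact ⟨trivial, h⟩
  | cons a α ih =>
    obtain ⟨h1, h2⟩ := h
    obtain ⟨h3, h4⟩ := ih (fire d x a) h2
    exact ⟨⟨h1, h3⟩, h4⟩

lemma fire_cast (d : V → V → ℕ) (x : V → ℕ) (v : V) (h : outdeg d v ≤ x v) (u : V) :
    ((fire d x v u : ℕ) : ℤ) = (x u : ℤ) + laplacian d u v := by
  unfold fire laplacian
  by_cases hu : u = v
  · subst hu; simp [Nat.cast_sub h]; ring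
  · simp [hu]

lemma runGame_cast (d : V → V → ℕ) (x : V → ℕ) (α : List V) (h : LegalSeq d x α) (v : V) :
    ((runGame d x α v : ℕ) : ℤ) =
      (x v : ℤ) + (laplacian d).mulVec (fun u => (α.count u : ℤ)) v := by
  induction α generalizing x with
  | nil => simp [runGame, Matrix.mulVec, dotProduct]
  | cons a α ih =>
    obtain ⟨h1, h2⟩ := h
    have key := ih (fire d x a) h2
    have hrg : runGame d x (a :: α) = runGame d (fire d x a) α := rfl
    rw [hrg, key, fire_cast d x a h1 v]
    have hc : (fun u => (((a :: α).count u : ℕ) : ℤ)) =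
        (fun u => ((α.count u : ℕ) : ℤ)) + (fun u => if u = a then 1 else 0) := by
      funext u
      by_cases hu : u = a <;> simp [List.count_cons, hu] <;> exact Ne.symm hu
    rw [hc, Matrix.mulVec_add]
    have hone : (laplacian d).mulVec (fun u => if u = a then (1 : ℤ) else 0) v
        = laplacian d v a := by
      simp [Matrix.mulVec, dotProduct]
    rw [Pi.add_apply, hone]
    ring

lemma colsum_zero (d : V → V → ℕ) (hloop : Loopless d) (u : V) :
    ∑ w, laplacian d w u = 0 := by
  have hw : ∀ w, laplacian d w u = (d u w : ℤ) - (if w = u then (outdeg d u : ℤ) else 0) := by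
    intro w
    unfold laplacian
    by_cases h : w = u
    · subst h; simp [hloop w]
    · simp [h]
  rw [Finset.sum_congr rfl fun w _ => hw w, Finset.sum_sub_distrib]
  simp [outdeg]

lemma mulVec_sum_zero (d : V → V → ℕ) (hloop : Loopless d) (c : V → ℤ) :
    ∑ v, (laplacian d).mulVec c v = 0 := by
  simp only [Matrix.mulVec, dotProduct]
  rw [Finset.sum_comm]
  have : ∀ u : V, ∑ v, laplacian d v u * c u = 0 := by
    intro u
    rw [← Finset.sum_mul, colsum_zero d hloop u, zero_mul]
  simp [this]

lemma ofFn_split (s : ℕ → V) (n k : ℕ) :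
    (List.ofFn fun i : Fin (n + k) => s i)
      = (List.ofFn fun i : Fin n => s i) ++ (List.ofFn fun j : Fin k => s (n + j)) := by
  rw [List.ofFn_add]
  congr 1

end Aux

/-- If `x` is non-terminating then some recurrent distribution `y` is
reachable from `x`; in particular `x ~ y`. -/
theorem exists_recurrent_of_nonTerminating {V : Type*} [Fintype V] [DecidableEq V]
    (d : V → V → ℕ) (hloop : Loopless d) (hconn : WeaklyConnected d)
    (x : V → ℕ) (hnt : NonTerminating d x) :
    ∃ y : V → ℕ, Recurrent d y ∧ Reaches d x y ∧ LinEquiv d x y := by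
  obtain ⟨s, hs⟩ := hnt
  set N : ℕ := ∑ v, x v with hN
  set st : ℕ → (V → ℕ) := fun n => runGame d x (List.ofFn fun i : Fin n => s i) with hst
  have hsum : ∀ n, ∑ v, st n v = N := by
    intro n
    have hz : ((∑ v, st n v : ℕ) : ℤ) = ((N : ℕ) : ℤ) := by
      push_cast
      calc ∑ v, ((st n v : ℕ) : ℤ)
          = ∑ v, ((x v : ℤ)
              + (laplacian d).mulVec (fun u => ((List.ofFn fun i : Fin n => s i).count u : ℤ)) v) :=
            Finset.sum_congr rfl fun v _ => runGame_cast d x _ (hs n) v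
        _ = ∑ v, (x v : ℤ) := by
            rw [Finset.sum_add_distrib, mulVec_sum_zero d hloop, add_zero]
        _ = ((N : ℕ) : ℤ) := by rw [hN]; push_cast; rfl
    exact_mod_cast hz
  let F : ℕ → (V → Fin (N + 1)) := fun n v => ⟨st n v, by
    have h1 := Finset.single_le_sum (f := st n) (fun _ _ => Nat.zero_le _) (Finset.mem_univ v)
    have h2 := hsum n
    omega⟩
  obtain ⟨n, m, hne, heqF⟩ := Finite.exists_ne_map_eq_of_infinite F
  have hkey : ∀ a b : ℕ, a < b → st a = st b →
      ∃ y : V → ℕ, Recurrent d y ∧ Reaches d x y ∧ LinEquiv d x y := by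
    intro a b hab heq
    refine ⟨st a, ?_, ?_, ?_⟩
    · -- recurrent
      have hm : a + (b - a) = b := Nat.add_sub_cancel' hab.le
      have hL : LegalSeq d x (List.ofFn fun i : Fin (a + (b - a)) => s i) := by
        rw [hm]; exact hs b
      rw [ofFn_split] at hL
      obtain ⟨h1, h2⟩ := legalSeq_append d x _ _ hL
      refine ⟨List.ofFn fun j : Fin (b - a) => s (a + j), ?_, h2, ?_⟩
      · intro hnil
        have := congrArg List.length hnil
        simp at this
        omega
      · have : runGame d x ((List.ofFn fun i : Fin a => s i)
            ++ (List.ofFn fun j : Fin (b - a) => s (a + j))) = st b := by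
          rw [← ofFn_split, hst]
          simp only []
          rw [hm]
        rw [runGame_append] at this
        rw [this, ← heq]
    · exact ⟨_, hs a, rfl⟩
    · refine ⟨fun u => -(((List.ofFn fun i : Fin a => s i).count u : ℤ)), fun v => ?_⟩
      have := runGame_cast d x _ (hs a) v
      have hneg : (laplacian d).mulVec (fun u => -(((List.ofFn fun i : Fin a => s i).count u : ℤ)))
          = -((laplacian d).mulVec (fun u => (((List.ofFn fun i : Fin a => s i).count u : ℤ)))) := by
        rw [← Matrix.mulVec_neg]
        rfl
      rw [hneg, Pi.neg_apply]
      have hstv : ((st a v : ℕ) : ℤ)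
          = (x v : ℤ) + (laplacian d).mulVec
              (fun u => (((List.ofFn fun i : Fin a => s i).count u : ℤ))) v := this
      linarith
  have heq : st n = st m := by
    funext v
    have := congrFun heqF v
    exact congrArg Fin.val this
  rcases lt_trichotomy n m with h | h | h
  · exact hkey n m h heq
  · exact absurd h hne
  · exact hkey m n h heq.symm

end ChipFiring
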